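/- Let V, W be affine real algebraic varieties, A ⊆ V a constructible subset, and {U₁,…,Uᵣ} a cover of A by subsets that are open in the Euclidean topology on A and constructible in V. Then a map f : A → W is regulous if and only if each restriction f|_{Uᵢ} is regulous. -/

import Mathlib

open MvPolynomial Set

/-- Points of the ambient affine space `ℝ^m`. -/
abbrev Pt (m : ℕ) : Type := Fin m → ℝ

/-- A subset of `ℝ^m` is Zariski closed if it is the common zero set
of a family of real polynomials. -/
def ZarClosed {m : ℕ} (Z : Set (Pt m)) : Prop :=
  ∃ S : Set (MvPolynomial (Fin m) ℝ), Z = {x | ∀ p ∈ S, eval x p = 0}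

/-- Zariski locally closed subsets of `ℝ^m`. -/
def ZarLocClosed {m : ℕ} (L : Set (Pt m)) : Prop :=
  ∃ Z Z' : Set (Pt m), ZarClosed Z ∧ ZarClosed Z' ∧ L = Z \ Z'

/-- A set is constructible if it is a finite union of Zariski locally closed sets. -/
def Constructible {m : ℕ} (A : Set (Pt m)) : Prop :=
  ∃ (k : ℕ) (L : Fin k → Set (Pt m)), (∀ i, ZarLocClosed (L i)) ∧ A = ⋃ i, L i

/-- A set is irreducible (for the Zariski topology). -/
def ZarIrreducible {m : ℕ} (S : Set (Pt m)) : Prop :=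
  S.Nonempty ∧ ∀ Z Z' : Set (Pt m), ZarClosed Z → ZarClosed Z' → S ⊆ Z ∪ Z' →
    S ⊆ Z ∨ S ⊆ Z'

/-- A stratification of `A`: a finite family of pairwise disjoint Zariski locally
closed sets whose union is `A`. -/
def IsStratification {m : ℕ} (A : Set (Pt m)) {k : ℕ} (S : Fin k → Set (Pt m)) : Prop :=
  (∀ i, ZarLocClosed (S i)) ∧ (Pairwise fun i j => Disjoint (S i) (S j)) ∧ (⋃ i, S i) = A

/-- `f` is a regular function on `A ⊆ ℝ^m`: a quotient of polynomials whose
denominator does not vanish on `A`. -/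
def RegularFnOn {m : ℕ} (A : Set (Pt m)) (f : Pt m → ℝ) : Prop :=
  ∃ p q : MvPolynomial (Fin m) ℝ, ∀ x ∈ A, eval x q ≠ 0 ∧ f x * eval x q = eval x p

/-- A regular map `A → ℝ^k` (componentwise regular). -/
def RegularMapOn {m k : ℕ} (A : Set (Pt m)) (f : Pt m → Pt k) : Prop :=
  ∀ j, RegularFnOn A fun x => f x j

/-- A regulous function on `A`: Euclidean-continuous on `A` and regular on each
stratum of some stratification of `A`. -/
def RegulousFnOn {m : ℕ} (A : Set (Pt m)) (f : Pt m → ℝ) : Prop :=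
  ContinuousOn f A ∧
    ∃ (k : ℕ) (S : Fin k → Set (Pt m)), IsStratification A S ∧ ∀ i, RegularFnOn (S i) f

/-- A regulous map `A → ℝ^k`. -/
def RegulousMapOn {m k : ℕ} (A : Set (Pt m)) (f : Pt m → Pt k) : Prop :=
  ContinuousOn f A ∧
    ∃ (r : ℕ) (S : Fin r → Set (Pt m)), IsStratification A S ∧ ∀ i, RegularMapOn (S i) f

/-- `U` is an open subset of `X` in the constructible topology: the complement in `X`
of a Euclidean-closed constructible set. -/
def ConstructibleOpenIn {m : ℕ} (X U : Set (Pt m)) : Prop :=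
  U ⊆ X ∧ ∃ F : Set (Pt m), Constructible F ∧ IsClosed F ∧ U = X \ F

section AuxZC
variable {m : ℕ}

lemma zc_univ : ZarClosed (univ : Set (Pt m)) := ⟨∅, by ext x; simp⟩

lemma zc_empty : ZarClosed (∅ : Set (Pt m)) := ⟨{1}, by ext x; simp⟩

lemma zc_inter {Z Y : Set (Pt m)} (hZ : ZarClosed Z) (hY : ZarClosed Y) :
    ZarClosed (Z ∩ Y) := by
  obtain ⟨S, rfl⟩ := hZ; obtain ⟨T, rfl⟩ := hY
  refine ⟨S ∪ T, ?_⟩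
  ext x
  simp only [mem_inter_iff, mem_setOf_eq, mem_union]
  constructor
  · rintro ⟨h1, h2⟩ p (hp | hp)
    exacts [h1 p hp, h2 p hp]
  · intro h
    exact ⟨fun p hp => h p (Or.inl hp), fun p hp => h p (Or.inr hp)⟩

lemma zc_union {Z Y : Set (Pt m)} (hZ : ZarClosed Z) (hY : ZarClosed Y) :
    ZarClosed (Z ∪ Y) := by
  obtain ⟨S, rfl⟩ := hZ; obtain ⟨T, rfl⟩ := hY
  refine ⟨{r | ∃ p ∈ S, ∃ q ∈ T, r = p * q}, ?_⟩
  ext x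
  simp only [mem_union, mem_setOf_eq]
  constructor
  · rintro (h | h) r ⟨p, hp, q, hq, rfl⟩ <;> rw [map_mul]
    · rw [h p hp, zero_mul]
    · rw [h q hq, mul_zero]
  · intro h
    by_cases hx : ∀ p ∈ S, eval x p = 0
    · exact Or.inl hx
    · push_neg at hx
      obtain ⟨p, hp, hpne⟩ := hx
      refine Or.inr fun q hq => ?_
      have := h (p * q) ⟨p, hp, q, hq, rfl⟩
      rw [map_mul] at this
      exact (mul_eq_zero.mp this).resolve_left hpne

lemma zlc_of_zc {Z : Set (Pt m)} (hZ : ZarClosed Z) : ZarLocClosed Z :=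
  ⟨Z, ∅, hZ, zc_empty, (diff_empty).symm⟩

lemma zlc_inter {L M : Set (Pt m)} (hL : ZarLocClosed L) (hM : ZarLocClosed M) :
    ZarLocClosed (L ∩ M) := by
  obtain ⟨Z, Z', hZ, hZ', rfl⟩ := hL
  obtain ⟨Y, Y', hY, hY', rfl⟩ := hM
  refine ⟨Z ∩ Y, Z' ∪ Y', zc_inter hZ hY, zc_union hZ' hY', ?_⟩
  ext x; simp only [mem_inter_iff, mem_diff, mem_union]; tauto

/-- L \ M is a disjoint union of two locally closed subsets of L. -/
lemma zlc_diff_split {L M : Set (Pt m)} (hL : ZarLocClosed L) (hM : ZarLocClosed M) :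
    ∃ P Q : Set (Pt m), ZarLocClosed P ∧ ZarLocClosed Q ∧ Disjoint P Q ∧
      P ∪ Q = L \ M ∧ P ⊆ L ∧ Q ⊆ L := by
  obtain ⟨Z, Z', hZ, hZ', rfl⟩ := hL
  obtain ⟨Y, Y', hY, hY', rfl⟩ := hM
  refine ⟨Z \ (Z' ∪ Y), (Z ∩ Y ∩ Y') \ Z',
    ⟨Z, Z' ∪ Y, hZ, zc_union hZ' hY, rfl⟩,
    ⟨Z ∩ Y ∩ Y', Z', zc_inter (zc_inter hZ hY) hY', hZ', rfl⟩, ?_, ?_, ?_, ?_⟩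
  · rw [Set.disjoint_left]
    rintro x ⟨_, hx⟩ ⟨⟨⟨_, hxY⟩, _⟩, _⟩
    exact hx (Or.inr hxY)
  · ext x
    simp only [mem_union, mem_diff, mem_inter_iff]
    tauto
  · rintro x ⟨hxZ, hx⟩; exact ⟨hxZ, fun h => hx (Or.inl h)⟩
  · rintro x ⟨⟨⟨hxZ, _⟩, _⟩, hx⟩; exact ⟨hxZ, hx⟩

end AuxZC

/-- Union of a list of sets. -/
def UL {m : ℕ} (l : List (Set (Pt m))) : Set (Pt m) := l.foldr (· ∪ ·) ∅

section AuxUL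
variable {m : ℕ}

@[simp] lemma UL_nil : UL ([] : List (Set (Pt m))) = ∅ := rfl

@[simp] lemma UL_cons (a : Set (Pt m)) (l : List (Set (Pt m))) :
    UL (a :: l) = a ∪ UL l := rfl

lemma mem_UL {l : List (Set (Pt m))} {x : Pt m} :
    x ∈ UL l ↔ ∃ L ∈ l, x ∈ L := by
  induction l with
  | nil => simp
  | cons a l ih => simp [ih]

lemma subset_UL {l : List (Set (Pt m))} {L : Set (Pt m)} (hL : L ∈ l) : L ⊆ UL l :=
  fun x hx => mem_UL.mpr ⟨L, hL, hx⟩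

@[simp] lemma UL_append (l l' : List (Set (Pt m))) : UL (l ++ l') = UL l ∪ UL l' := by
  induction l with
  | nil => simp
  | cons a l ih => simp [ih, union_assoc]

lemma UL_ofFn {n : ℕ} (T : Fin n → Set (Pt m)) : UL (List.ofFn T) = ⋃ i, T i := by
  ext x
  simp only [mem_UL, List.mem_ofFn, mem_iUnion]
  constructor
  · rintro ⟨L, ⟨i, rfl⟩, hx⟩; exact ⟨i, hx⟩
  · rintro ⟨i, hx⟩; exact ⟨T i, ⟨i, rfl⟩, hx⟩

lemma UL_get (l : List (Set (Pt m))) : (⋃ i, l.get i) = UL l := by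
  ext x
  simp only [mem_iUnion, mem_UL]
  constructor
  · rintro ⟨i, hx⟩; exact ⟨l.get i, l.get_mem _, hx⟩
  · rintro ⟨L, hL, hx⟩
    obtain ⟨i, rfl⟩ := List.mem_iff_get.mp hL
    exact ⟨i, hx⟩

lemma constructible_iff_list {A : Set (Pt m)} :
    Constructible A ↔ ∃ l : List (Set (Pt m)), (∀ L ∈ l, ZarLocClosed L) ∧ UL l = A := by
  constructor
  · rintro ⟨k, L, hL, rfl⟩
    refine ⟨List.ofFn L, ?_, UL_ofFn L⟩
    intro M hM
    obtain ⟨i, rfl⟩ := List.mem_ofFn.mp hM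
    exact hL i
  · rintro ⟨l, hl, rfl⟩
    exact ⟨l.length, l.get, fun i => hl _ (l.get_mem _), (UL_get l).symm⟩

lemma con_empty : Constructible (∅ : Set (Pt m)) :=
  constructible_iff_list.mpr ⟨[], by simp, by simp⟩

lemma con_of_zlc {L : Set (Pt m)} (hL : ZarLocClosed L) : Constructible L :=
  constructible_iff_list.mpr ⟨[L], by simp [hL], by simp⟩

lemma con_union {A B : Set (Pt m)} (hA : Constructible A) (hB : Constructible B) :
    Constructible (A ∪ B) := by
  obtain ⟨l, hl, rfl⟩ := constructible_iff_list.mp hA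
  obtain ⟨l', hl', rfl⟩ := constructible_iff_list.mp hB
  refine constructible_iff_list.mpr ⟨l ++ l', ?_, by simp⟩
  intro L hL
  rcases List.mem_append.mp hL with h | h
  exacts [hl L h, hl' L h]

lemma UL_map_inter {M : Set (Pt m)} (l : List (Set (Pt m))) :
    UL (l.map (· ∩ M)) = UL l ∩ M := by
  induction l with
  | nil => simp
  | cons a l ih => simp only [List.map_cons, UL_cons, ih]; rw [union_inter_distrib_right]

lemma con_inter_zlc {A M : Set (Pt m)} (hA : Constructible A) (hM : ZarLocClosed M) :
    Constructible (A ∩ M) := by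
  obtain ⟨l, hl, rfl⟩ := constructible_iff_list.mp hA
  refine constructible_iff_list.mpr ⟨l.map (· ∩ M), ?_, UL_map_inter l⟩
  intro L hL
  obtain ⟨L', hL', rfl⟩ := List.mem_map.mp hL
  exact zlc_inter (hl L' hL') hM

lemma con_inter {A B : Set (Pt m)} (hA : Constructible A) (hB : Constructible B) :
    Constructible (A ∩ B) := by
  obtain ⟨l, hl, rfl⟩ := constructible_iff_list.mp hB
  clear hB
  induction l with
  | nil => simpa using con_empty
  | cons a l ih =>
    rw [UL_cons, inter_union_distrib_left]
    exact con_union (con_inter_zlc hA (hl a (by simp)))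
      (ih fun L h => hl L (List.mem_cons_of_mem a h))

lemma con_compl {A : Set (Pt m)} (hA : Constructible A) : Constructible Aᶜ := by
  obtain ⟨l, hl, rfl⟩ := constructible_iff_list.mp hA
  clear hA
  induction l with
  | nil => simpa using con_of_zlc (zlc_of_zc zc_univ)
  | cons a l ih =>
    rw [UL_cons, compl_union]
    refine con_inter ?_ (ih fun L h => hl L (List.mem_cons_of_mem a h))
    obtain ⟨Z, Z', hZ, hZ', rfl⟩ := hl a (by simp)
    have : (Z \ Z')ᶜ = (univ \ Z) ∪ Z' := by
      ext x; simp only [mem_compl_iff, mem_diff, mem_union, mem_univ, true_and]; tauto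
    rw [this]
    exact con_union (con_of_zlc ⟨univ, Z, zc_univ, hZ, rfl⟩) (con_of_zlc (zlc_of_zc hZ'))

lemma con_diff {A B : Set (Pt m)} (hA : Constructible A) (hB : Constructible B) :
    Constructible (A \ B) :=
  con_inter hA (con_compl hB)

end AuxUL

/-- A list that is a partition: Zariski locally closed, pairwise disjoint entries. -/
def PartList {m : ℕ} (l : List (Set (Pt m))) : Prop :=
  (∀ L ∈ l, ZarLocClosed L) ∧ l.Pairwise Disjoint

section AuxPart
variable {m k : ℕ}

lemma partList_nil : PartList ([] : List (Set (Pt m))) := ⟨by simp, by simp⟩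

lemma partList_cons {a : Set (Pt m)} {l : List (Set (Pt m))}
    (ha : ZarLocClosed a) (hd : Disjoint a (UL l)) (hl : PartList l) :
    PartList (a :: l) := by
  refine ⟨?_, List.pairwise_cons.mpr ⟨fun L hL => hd.mono_right (subset_UL hL), hl.2⟩⟩
  intro L hL
  rcases List.mem_cons.mp hL with rfl | h
  exacts [ha, hl.1 L h]

lemma partList_append {l l' : List (Set (Pt m))} (hl : PartList l) (hl' : PartList l')
    (hd : Disjoint (UL l) (UL l')) : PartList (l ++ l') := by
  refine ⟨?_, List.pairwise_append.mpr ⟨hl.2, hl'.2, ?_⟩⟩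
  · intro L hL
    rcases List.mem_append.mp hL with h | h
    exacts [hl.1 L h, hl'.1 L h]
  · intro a ha b hb
    exact (hd.mono_left (subset_UL ha)).mono_right (subset_UL hb)

/-- Removing a locally closed set from a partitioned union. -/
lemma partList_diff_zlc {l : List (Set (Pt m))} (hl : PartList l)
    {M : Set (Pt m)} (hM : ZarLocClosed M) :
    ∃ l' : List (Set (Pt m)), PartList l' ∧ UL l' = UL l \ M := by
  induction l with
  | nil => exact ⟨[], partList_nil, by simp⟩
  | cons a l ih =>
    obtain ⟨l', hl', hUl'⟩ := ih ⟨fun L h => hl.1 L (List.mem_cons_of_mem a h),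
      (List.pairwise_cons.mp hl.2).2⟩
    obtain ⟨P, Q, hP, hQ, hPQ, hPQu, hPa, hQa⟩ :=
      zlc_diff_split (hl.1 a (List.mem_cons_self)) hM
    have hdal : Disjoint a (UL l) := by
      rw [Set.disjoint_left]
      intro x hx hx'
      obtain ⟨L, hL, hxL⟩ := mem_UL.mp hx'
      exact ((List.pairwise_cons.mp hl.2).1 L hL).le_bot ⟨hx, hxL⟩
    have hsub : UL l' ⊆ UL l := hUl' ▸ diff_subset
    refine ⟨P :: Q :: l', ?_, ?_⟩
    · refine partList_cons hP ?_ (partList_cons hQ ?_ hl')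
      · rw [UL_cons]
        exact Disjoint.union_right hPQ ((hdal.mono_left hPa).mono_right hsub)
      · exact (hdal.mono_left hQa).mono_right hsub
    · rw [UL_cons, UL_cons, ← union_assoc, hPQu, hUl', UL_cons, union_diff_distrib]

/-- Every constructible set admits a finite partition into locally closed sets. -/
lemma part_of_con {C : Set (Pt m)} (hC : Constructible C) :
    ∃ l : List (Set (Pt m)), PartList l ∧ UL l = C := by
  obtain ⟨ls, hls, rfl⟩ := constructible_iff_list.mp hC
  clear hC
  induction ls with
  | nil => exact ⟨[], partList_nil, by simp⟩
  | cons a ls ih =>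
    obtain ⟨l, hl, hUl⟩ := ih fun L h => hls L (List.mem_cons_of_mem a h)
    have ha : ZarLocClosed a := hls a (List.mem_cons_self)
    obtain ⟨l', hl', hUl'⟩ := partList_diff_zlc hl ha
    refine ⟨a :: l', partList_cons ha ?_ hl', ?_⟩
    · rw [hUl']; exact disjoint_sdiff_right
    · rw [UL_cons, hUl', hUl, UL_cons, union_diff_self]

lemma regularFnOn_mono {A B : Set (Pt m)} {f : Pt m → ℝ} (h : B ⊆ A)
    (hf : RegularFnOn A f) : RegularFnOn B f := by
  obtain ⟨p, q, hpq⟩ := hf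
  exact ⟨p, q, fun x hx => hpq x (h hx)⟩

lemma regularMapOn_mono {A B : Set (Pt m)} {f : Pt m → Pt k} (h : B ⊆ A)
    (hf : RegularMapOn A f) : RegularMapOn B f :=
  fun j => regularFnOn_mono h (hf j)

/-- `f` admits a finite partition of `A` into locally closed sets on which it is regular. -/
def RegPart {m k : ℕ} (A : Set (Pt m)) (f : Pt m → Pt k) : Prop :=
  ∃ l : List (Set (Pt m)), PartList l ∧ UL l = A ∧ ∀ L ∈ l, RegularMapOn L f

lemma regPart_empty {f : Pt m → Pt k} : RegPart (∅ : Set (Pt m)) f :=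
  ⟨[], partList_nil, by simp, by simp⟩

lemma regPart_union {A B : Set (Pt m)} {f : Pt m → Pt k} (hA : RegPart A f)
    (hB : RegPart B f) (hd : Disjoint A B) : RegPart (A ∪ B) f := by
  obtain ⟨l, hl, hUl, hrl⟩ := hA
  obtain ⟨l', hl', hUl', hrl'⟩ := hB
  refine ⟨l ++ l', partList_append hl hl' (by rw [hUl, hUl']; exact hd), by simp [hUl, hUl'], ?_⟩
  intro L hL
  rcases List.mem_append.mp hL with h | h
  exacts [hrl L h, hrl' L h]

lemma regPart_of_con_subset {C S : Set (Pt m)} {f : Pt m → Pt k}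
    (hC : Constructible C) (hCS : C ⊆ S) (hf : RegularMapOn S f) : RegPart C f := by
  obtain ⟨l, hl, hUl⟩ := part_of_con hC
  exact ⟨l, hl, hUl, fun L hL =>
    regularMapOn_mono (((subset_UL hL).trans hUl.subset).trans hCS) hf⟩

lemma regPart_restrict_aux {f : Pt m → Pt k} :
    ∀ l : List (Set (Pt m)), PartList l → (∀ L ∈ l, RegularMapOn L f) →
      ∀ C : Set (Pt m), Constructible C → C ⊆ UL l → RegPart C f := by
  intro l
  induction l with
  | nil =>
    intro _ _ C _ hCA
    simp only [UL_nil, subset_empty_iff] at hCA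
    simpa [hCA] using regPart_empty
  | cons a l ih =>
    intro hl hrl C hC hCA
    have hCdecomp : C = (C ∩ a) ∪ (C \ a) := by
      ext x; simp only [mem_union, mem_inter_iff, mem_diff]; tauto
    rw [hCdecomp]
    refine regPart_union ?_ ?_ ?_
    · exact regPart_of_con_subset (con_inter hC (con_of_zlc (hl.1 a (List.mem_cons_self))))
        inter_subset_right (hrl a (List.mem_cons_self))
    · refine ih ⟨fun L h => hl.1 L (List.mem_cons_of_mem a h),
        (List.pairwise_cons.mp hl.2).2⟩ (fun L h => hrl L (List.mem_cons_of_mem a h))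
        _ (con_diff hC (con_of_zlc (hl.1 a (List.mem_cons_self)))) ?_
      intro x hx
      rcases mem_UL.mp (hCA hx.1) with ⟨L, hL, hxL⟩
      rcases List.mem_cons.mp hL with rfl | h
      · exact absurd hxL hx.2
      · exact mem_UL.mpr ⟨L, h, hxL⟩
    · exact Set.disjoint_left.mpr fun x hx hx' => hx'.2 hx.2

lemma regPart_restrict {A C : Set (Pt m)} {f : Pt m → Pt k}
    (hA : RegPart A f) (hC : Constructible C) (hCA : C ⊆ A) : RegPart C f := by
  obtain ⟨l, hl, rfl, hrl⟩ := hA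
  exact regPart_restrict_aux l hl hrl C hC hCA

end AuxPart

section AuxBridge
variable {m k : ℕ}

lemma regulous_iff {A : Set (Pt m)} {f : Pt m → Pt k} :
    RegulousMapOn A f ↔ ContinuousOn f A ∧ RegPart A f := by
  constructor
  · rintro ⟨hc, r, S, ⟨hzlc, hdisj, hun⟩, hreg⟩
    refine ⟨hc, List.ofFn S, ⟨?_, ?_⟩, by rw [UL_ofFn, hun], ?_⟩
    · intro L hL
      obtain ⟨i, rfl⟩ := List.mem_ofFn.mp hL
      exact hzlc i
    · rw [List.pairwise_iff_get]
      intro i j hij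
      simp only [List.get_ofFn]
      refine hdisj ?_
      intro h
      apply absurd (Fin.cast_injective _ h)
      omega
    · intro L hL
      obtain ⟨i, rfl⟩ := List.mem_ofFn.mp hL
      exact hreg i
  · rintro ⟨hc, l, ⟨hzlc, hdisj⟩, hUl, hreg⟩
    refine ⟨hc, l.length, l.get, ⟨fun i => hzlc _ (l.get_mem _), ?_, by rw [UL_get, hUl]⟩,
      fun i => hreg _ (l.get_mem _)⟩
    intro i j hij
    rw [List.pairwise_iff_get] at hdisj
    rcases lt_or_gt_of_ne hij with h | h
    · exact hdisj i j h
    · exact (hdisj j i h).symm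

lemma con_iUnion {n : ℕ} {T : Fin n → Set (Pt m)} (hT : ∀ i, Constructible (T i)) :
    Constructible (⋃ i, T i) := by
  induction n with
  | zero => simpa using con_empty
  | succ n ih =>
    have : (⋃ i, T i) = T 0 ∪ ⋃ i : Fin n, T i.succ := by
      ext x
      simp only [mem_iUnion, mem_union]
      constructor
      · rintro ⟨i, hx⟩
        rcases Fin.eq_zero_or_eq_succ i with rfl | ⟨j, rfl⟩
        exacts [Or.inl hx, Or.inr ⟨j, hx⟩]
      · rintro (hx | ⟨i, hx⟩)
        exacts [⟨0, hx⟩, ⟨i.succ, hx⟩]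
    rw [this]
    exact con_union (hT 0) (ih fun i => hT i.succ)

lemma regPart_iUnion {n : ℕ} {T : Fin n → Set (Pt m)} {f : Pt m → Pt k}
    (hT : ∀ i, RegPart (T i) f)
    (hd : Pairwise fun i j => Disjoint (T i) (T j)) :
    RegPart (⋃ i, T i) f := by
  induction n with
  | zero => simpa using regPart_empty
  | succ n ih =>
    have heq : (⋃ i, T i) = T 0 ∪ ⋃ i : Fin n, T i.succ := by
      ext x
      simp only [mem_iUnion, mem_union]
      constructor
      · rintro ⟨i, hx⟩
        rcases Fin.eq_zero_or_eq_succ i with rfl | ⟨j, rfl⟩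
        exacts [Or.inl hx, Or.inr ⟨j, hx⟩]
      · rintro (hx | ⟨i, hx⟩)
        exacts [⟨0, hx⟩, ⟨i.succ, hx⟩]
    rw [heq]
    refine regPart_union (hT 0) (ih (fun i => hT i.succ) ?_) ?_
    · intro i j hij
      exact hd (fun h => hij (Fin.succ_injective _ h))
    · exact disjoint_iUnion_right.mpr fun i => hd (Fin.succ_ne_zero i).symm

end AuxBridge

/-- Regulousness is local with respect to finite covers of `A` by
Euclidean-open constructible subsets. -/
theorem stmt2 {m k : ℕ} (A : Set (Pt m)) (hA : Constructible A)
    (W : Set (Pt k)) (hW : ZarClosed W)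
    (r : ℕ) (U : Fin r → Set (Pt m))
    (hUc : ∀ i, Constructible (U i))
    (hUo : ∀ i, ∃ O : Set (Pt m), IsOpen O ∧ U i = A ∩ O)
    (hcov : A ⊆ ⋃ i, U i)
    (f : Pt m → Pt k) (hfW : ∀ x ∈ A, f x ∈ W) :
    RegulousMapOn A f ↔ ∀ i, RegulousMapOn (U i) f := by
  have hUA : ∀ i, U i ⊆ A := by
    intro i
    obtain ⟨O, _, hEq⟩ := hUo i
    rw [hEq]; exact inter_subset_left
  rw [regulous_iff]
  constructor
  · rintro ⟨hc, hp⟩ i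
    rw [regulous_iff]
    exact ⟨hc.mono (hUA i), regPart_restrict hp (hUc i) (hUA i)⟩
  · intro h
    replace h := fun i => regulous_iff.mp (h i)
    constructor
    · -- continuity is local
      intro x hx
      obtain ⟨i, hxi⟩ := mem_iUnion.mp (hcov hx)
      obtain ⟨O, hO, hEq⟩ := hUo i
      have hxO : x ∈ O := (hEq ▸ hxi).2
      have hmem : U i ∈ nhdsWithin x A := by
        rw [hEq]
        exact inter_mem_nhdsWithin A (hO.mem_nhds hxO)
      exact ((h i).1 x hxi).mono_of_mem_nhdsWithin hmem
    · -- the disjointification V i = (A ∩ U i) \ ⋃ {U j : j < i}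
      set D : Fin r → Set (Pt m) := fun i => ⋃ j, if j < i then U j else ∅ with hD
      set V : Fin r → Set (Pt m) := fun i => (A ∩ U i) \ D i with hV
      have hmemD : ∀ i x, x ∈ D i ↔ ∃ j < i, x ∈ U j := by
        intro i x
        simp only [hD, mem_iUnion]
        constructor
        · rintro ⟨j, hj⟩
          by_cases hji : j < i
          · rw [if_pos hji] at hj; exact ⟨j, hji, hj⟩
          · rw [if_neg hji] at hj; exact absurd hj (notMem_empty x)
        · rintro ⟨j, hji, hj⟩
          exact ⟨j, by rw [if_pos hji]; exact hj⟩
      have hVU : ∀ i, V i ⊆ U i := fun i x hx => hx.1.2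
      have hVcon : ∀ i, Constructible (V i) := by
        intro i
        refine con_diff (con_inter hA (hUc i)) (con_iUnion fun j => ?_)
        by_cases hji : j < i
        · rw [if_pos hji]; exact hUc j
        · rw [if_neg hji]; exact con_empty
      have hVdisj : Pairwise fun i j => Disjoint (V i) (V j) := by
        have key : ∀ i j : Fin r, i < j → Disjoint (V i) (V j) := by
          intro i j hij
          rw [Set.disjoint_left]
          intro x hxi hxj
          exact hxj.2 ((hmemD j x).mpr ⟨i, hij, hxi.1.2⟩)
        intro i j hij
        rcases lt_or_gt_of_ne hij with h' | h'
        · exact key i j h'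
        · exact (key j i h').symm
      have hVA : (⋃ i, V i) = A := by
        apply subset_antisymm
        · exact iUnion_subset fun i x hx => hx.1.1
        · intro x hx
          have hex : ∃ i, x ∈ U i := mem_iUnion.mp (hcov hx)
          classical
          let s : Finset (Fin r) := Finset.univ.filter fun i => x ∈ U i
          have hs : s.Nonempty := ⟨hex.choose, by simp [s, hex.choose_spec]⟩
          set i0 := s.min' hs with hi0
          have hxi0 : x ∈ U i0 := by
            have := s.min'_mem hs
            simp only [s, Finset.mem_filter] at this
            exact this.2
          refine mem_iUnion.mpr ⟨i0, ⟨hx, hxi0⟩, ?_⟩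
          intro hxD
          obtain ⟨j, hji, hxj⟩ := (hmemD i0 x).mp hxD
          have : i0 ≤ j := s.min'_le j (by simp [s, hxj])
          omega
      rw [← hVA]
      refine regPart_iUnion (fun i => regPart_restrict (h i).2 (hVcon i) (hVU i)) hVdisj
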